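/- For every integrable random variable X on an atomless probability space and every α ∈ (0,1), ES_α(X) = min over t ∈ ℝ of { t + (1/(1−α))·E[(X − t)_+] }, and the minimum is attained. -/

import Mathlib

open MeasureTheory Set

/-- An atomless measure: every set of nonzero measure can be split nontrivially. -/
def Atomless {Ω : Type*} [MeasurableSpace Ω] (μ : Measure Ω) : Prop :=
  ∀ A : Set Ω, MeasurableSet A → μ A ≠ 0 →
    ∃ B ⊆ A, MeasurableSet B ∧ μ B ≠ 0 ∧ μ B ≠ μ A

/-- Left quantile (lower Value-at-Risk) of `X` at level `β`. -/
noncomputable def VaR {Ω : Type*} [MeasurableSpace Ω] (μ : Measure Ω) (X : Ω → ℝ) (β : ℝ) : ℝ :=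
  sInf {t : ℝ | ENNReal.ofReal β ≤ μ {ω | X ω ≤ t}}

/-- Expected Shortfall of `X` at level `α ∈ [0,1)`. -/
noncomputable def ES {Ω : Type*} [MeasurableSpace Ω] (μ : Measure Ω) (X : Ω → ℝ) (α : ℝ) : ℝ :=
  (1 - α)⁻¹ * ∫ β in Set.Ioo α 1, VaR μ X β

section VaRAux

open Filter

variable {Ω : Type*} [MeasurableSpace Ω] {μ : Measure Ω} [IsProbabilityMeasure μ] {X : Ω → ℝ}

lemma VaR_set_nonempty (hXmeas : Measurable X) {β : ℝ} (hβ : β < 1) :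
    {t : ℝ | ENNReal.ofReal β ≤ μ {ω | X ω ≤ t}}.Nonempty := by
  have hmono : Monotone fun n : ℕ => {ω | X ω ≤ (n : ℝ)} := by
    intro m n hmn ω hω
    simp only [Set.mem_setOf_eq] at hω ⊢
    exact le_trans hω (Nat.cast_le.2 hmn)
  have hU : (⋃ n : ℕ, {ω | X ω ≤ (n : ℝ)}) = Set.univ := by
    ext ω
    simp only [Set.mem_iUnion, Set.mem_setOf_eq, Set.mem_univ, iff_true]
    exact exists_nat_ge (X ω)
  have h1 : (⨆ n : ℕ, μ {ω | X ω ≤ (n : ℝ)}) = 1 := by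
    rw [← hmono.measure_iUnion, hU, measure_univ]
  have hlt : ENNReal.ofReal β < ⨆ n : ℕ, μ {ω | X ω ≤ (n : ℝ)} := by
    rw [h1]
    exact ENNReal.ofReal_lt_one.2 hβ
  obtain ⟨n, hn⟩ := lt_iSup_iff.1 hlt
  exact ⟨n, hn.le⟩

lemma VaR_set_bddBelow (hXmeas : Measurable X) {β : ℝ} (hβ : 0 < β) :
    BddBelow {t : ℝ | ENNReal.ofReal β ≤ μ {ω | X ω ≤ t}} := by
  have hanti : Antitone fun n : ℕ => {ω | X ω ≤ -(n : ℝ)} := by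
    intro m n hmn ω hω
    simp only [Set.mem_setOf_eq] at hω ⊢
    refine le_trans hω ?_
    simp only [neg_le_neg_iff]
    exact Nat.cast_le.2 hmn
  have hI : (⋂ n : ℕ, {ω | X ω ≤ -(n : ℝ)}) = ∅ := by
    ext ω
    simp only [Set.mem_iInter, Set.mem_setOf_eq, Set.mem_empty_iff_false, iff_false, not_forall,
      not_le]
    obtain ⟨n, hn⟩ := exists_nat_gt (-X ω)
    exact ⟨n, by linarith⟩
  have h0 : (⨅ n : ℕ, μ {ω | X ω ≤ -(n : ℝ)}) = 0 := by
    rw [← hanti.measure_iInter (fun n => (hXmeas measurableSet_Iic).nullMeasurableSet)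
      ⟨0, measure_ne_top μ _⟩, hI, measure_empty]
  have hlt : (⨅ n : ℕ, μ {ω | X ω ≤ -(n : ℝ)}) < ENNReal.ofReal β := by
    rw [h0]
    exact ENNReal.ofReal_pos.2 hβ
  obtain ⟨n, hn⟩ := iInf_lt_iff.1 hlt
  refine ⟨-(n : ℝ), fun t ht => ?_⟩
  by_contra h
  push_neg at h
  have hsub : μ {ω | X ω ≤ t} ≤ μ {ω | X ω ≤ -(n : ℝ)} :=
    measure_mono fun ω hω => le_trans hω h.le
  exact absurd (le_trans ht hsub) (not_le.2 hn)

lemma ofReal_le_measure_VaR (hXmeas : Measurable X) {β : ℝ} (hβ0 : 0 < β) (hβ1 : β < 1) :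
    ENNReal.ofReal β ≤ μ {ω | X ω ≤ VaR μ X β} := by
  have hne := VaR_set_nonempty (μ := μ) hXmeas hβ1
  have hbdd := VaR_set_bddBelow (μ := μ) hXmeas hβ0
  have key : ∀ n : ℕ, ENNReal.ofReal β ≤ μ {ω | X ω ≤ VaR μ X β + 1 / (n + 1)} := by
    intro n
    have hlt : sInf {t : ℝ | ENNReal.ofReal β ≤ μ {ω | X ω ≤ t}} <
        VaR μ X β + 1 / (n + 1) := by
      rw [VaR]
      have : (0 : ℝ) < 1 / (n + 1) := by positivity
      linarith
    obtain ⟨t, htS, htlt⟩ := (csInf_lt_iff hbdd hne).1 hlt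
    exact le_trans htS (measure_mono fun ω hω => le_trans hω htlt.le)
  have hanti : Antitone fun n : ℕ => {ω | X ω ≤ VaR μ X β + 1 / (n + 1)} := by
    intro m n hmn ω hω
    simp only [Set.mem_setOf_eq] at hω ⊢
    refine le_trans hω (add_le_add (le_refl _) ?_)
    gcongr
  have hIset : {ω | X ω ≤ VaR μ X β} = ⋂ n : ℕ, {ω | X ω ≤ VaR μ X β + 1 / (n + 1)} := by
    ext ω
    simp only [Set.mem_setOf_eq, Set.mem_iInter]
    constructor
    · intro h n
      have : (0 : ℝ) < 1 / (n + 1) := by positivity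
      linarith
    · intro h
      by_contra hc
      push_neg at hc
      obtain ⟨n, hn⟩ := exists_nat_one_div_lt (show (0 : ℝ) < X ω - VaR μ X β by linarith)
      have := h n
      linarith
  rw [hIset, hanti.measure_iInter (fun n => (hXmeas measurableSet_Iic).nullMeasurableSet)
    ⟨0, measure_ne_top μ _⟩]
  exact le_iInf key

lemma VaR_le_iff (hXmeas : Measurable X) {β t : ℝ} (hβ0 : 0 < β) (hβ1 : β < 1) :
    VaR μ X β ≤ t ↔ ENNReal.ofReal β ≤ μ {ω | X ω ≤ t} := by
  constructor
  · intro h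
    exact le_trans (ofReal_le_measure_VaR hXmeas hβ0 hβ1)
      (measure_mono fun ω hω => le_trans hω h)
  · intro h
    exact csInf_le (VaR_set_bddBelow hXmeas hβ0) h

lemma VaR_mono (hXmeas : Measurable X) {a b : ℝ} (ha0 : 0 < a) (hab : a ≤ b) (hb1 : b < 1) :
    VaR μ X a ≤ VaR μ X b :=
  (VaR_le_iff hXmeas ha0 (lt_of_le_of_lt hab hb1)).2
    (le_trans (ENNReal.ofReal_le_ofReal hab)
      (ofReal_le_measure_VaR hXmeas (lt_of_lt_of_le ha0 hab) hb1))

lemma VaR_le_iff' (hXmeas : Measurable X) {β c : ℝ} (hβ : β ∈ Set.Ioo (0 : ℝ) 1) :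
    VaR μ X β ≤ c ↔ β ≤ (μ {ω | X ω ≤ c}).toReal := by
  rw [VaR_le_iff hXmeas hβ.1 hβ.2,
    ENNReal.ofReal_le_iff_le_toReal (measure_ne_top μ {ω | X ω ≤ c})]

lemma measure_VaR_gt (hXmeas : Measurable X) (t : ℝ) :
    volume ({β : ℝ | t < VaR μ X β} ∩ Set.Ioo 0 1) = μ {ω | t < X ω} := by
  set p := (μ {ω | X ω ≤ t}).toReal with hp
  have hpF : ENNReal.ofReal p = μ {ω | X ω ≤ t} := ENNReal.ofReal_toReal (measure_ne_top μ _)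
  have hp0 : 0 ≤ p := ENNReal.toReal_nonneg
  have hset : {β : ℝ | t < VaR μ X β} ∩ Set.Ioo 0 1 = Set.Ioo p 1 := by
    ext β
    simp only [Set.mem_inter_iff, Set.mem_setOf_eq, Set.mem_Ioo]
    constructor
    · rintro ⟨h1, h2, h3⟩
      refine ⟨?_, h3⟩
      by_contra hc
      push_neg at hc
      have : VaR μ X β ≤ t :=
        (VaR_le_iff' hXmeas ⟨h2, h3⟩).2 hc
      exact absurd this (not_le.2 h1)
    · rintro ⟨h1, h2⟩
      have hβ0 : 0 < β := lt_of_le_of_lt hp0 h1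
      refine ⟨?_, hβ0, h2⟩
      by_contra hc
      push_neg at hc
      exact absurd ((VaR_le_iff' hXmeas ⟨hβ0, h2⟩).1 hc) (not_le.2 h1)
  have hcompl : {ω | t < X ω} = {ω | X ω ≤ t}ᶜ := by
    ext ω
    simp [not_le]
  have hms : MeasurableSet {ω | X ω ≤ t} := measurableSet_le hXmeas measurable_const
  rw [hset, Real.volume_Ioo, hcompl, measure_compl hms (measure_ne_top μ _), measure_univ,
    ← hpF, ENNReal.ofReal_sub _ hp0, ENNReal.ofReal_one]

lemma measurable_indicator_VaR (hXmeas : Measurable X) :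
    Measurable ((Set.Ioo (0 : ℝ) 1).indicator (VaR μ X)) := by
  apply measurable_of_Iic
  intro c
  by_cases h0c : (0 : ℝ) ≤ c
  · have hpre : (Set.Ioo (0 : ℝ) 1).indicator (VaR μ X) ⁻¹' Set.Iic c =
        (Set.Ioo 0 1 ∩ Set.Iic ((μ {ω | X ω ≤ c}).toReal)) ∪ (Set.Ioo (0 : ℝ) 1)ᶜ := by
      ext β
      by_cases hβ : β ∈ Set.Ioo (0 : ℝ) 1
      · simp [Set.indicator_of_mem hβ, hβ, VaR_le_iff' hXmeas hβ]
      · simp [Set.indicator_of_notMem hβ, hβ, h0c]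
    rw [hpre]
    exact ((measurableSet_Ioo.inter measurableSet_Iic).union measurableSet_Ioo.compl)
  · have hpre : (Set.Ioo (0 : ℝ) 1).indicator (VaR μ X) ⁻¹' Set.Iic c =
        Set.Ioo 0 1 ∩ Set.Iic ((μ {ω | X ω ≤ c}).toReal) := by
      ext β
      by_cases hβ : β ∈ Set.Ioo (0 : ℝ) 1
      · simp [Set.indicator_of_mem hβ, hβ, VaR_le_iff' hXmeas hβ]
      · simp [Set.indicator_of_notMem hβ, hβ, h0c]
    rw [hpre]
    exact measurableSet_Ioo.inter measurableSet_Iic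

lemma aemeasurable_VaR (hXmeas : Measurable X) {S : Set ℝ} (hSm : MeasurableSet S)
    (hS : S ⊆ Set.Ioo (0 : ℝ) 1) : AEMeasurable (VaR μ X) (volume.restrict S) := by
  refine ⟨(Set.Ioo (0 : ℝ) 1).indicator (VaR μ X), measurable_indicator_VaR hXmeas, ?_⟩
  filter_upwards [ae_restrict_mem hSm] with β hβ
  exact (Set.indicator_of_mem (hS hβ) _).symm

lemma lintegral_pos_part_eq (hXmeas : Measurable X) (s : ℝ) :
    ∫⁻ ω, ENNReal.ofReal (max (X ω - s) 0) ∂μ =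
      ∫⁻ β in Set.Ioo (0 : ℝ) 1, ENNReal.ofReal (max (VaR μ X β - s) 0) := by
  have hmX : AEMeasurable (fun ω => max (X ω - s) 0) μ :=
    ((hXmeas.sub measurable_const).max measurable_const).aemeasurable
  have hmQ : AEMeasurable (fun β => max (VaR μ X β - s) 0)
      (volume.restrict (Set.Ioo (0 : ℝ) 1)) :=
    ((aemeasurable_VaR hXmeas measurableSet_Ioo Set.Subset.rfl).sub aemeasurable_const).max
      aemeasurable_const
  have hnX : 0 ≤ᵐ[μ] fun ω => max (X ω - s) 0 :=
    Filter.Eventually.of_forall fun ω => le_max_right _ _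
  have hnQ : 0 ≤ᵐ[volume.restrict (Set.Ioo (0 : ℝ) 1)] fun β => max (VaR μ X β - s) 0 :=
    Filter.Eventually.of_forall fun β => le_max_right _ _
  rw [lintegral_eq_lintegral_meas_lt μ hnX hmX,
    lintegral_eq_lintegral_meas_lt (volume.restrict (Set.Ioo (0 : ℝ) 1)) hnQ hmQ]
  apply lintegral_congr_ae
  filter_upwards [ae_restrict_mem measurableSet_Ioi] with u hu
  have hu0 : (0 : ℝ) < u := hu
  have h1 : {ω | u < max (X ω - s) 0} = {ω | s + u < X ω} := by
    ext ω
    simp only [Set.mem_setOf_eq, lt_max_iff]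
    constructor
    · rintro (h | h)
      · linarith
      · linarith
    · intro h
      left
      linarith
  have h2 : {β : ℝ | u < max (VaR μ X β - s) 0} = {β : ℝ | s + u < VaR μ X β} := by
    ext β
    simp only [Set.mem_setOf_eq, lt_max_iff]
    constructor
    · rintro (h | h)
      · linarith
      · linarith
    · intro h
      left
      linarith
  rw [h1, h2, Measure.restrict_apply' measurableSet_Ioo, measure_VaR_gt hXmeas (s + u)]

lemma integrableOn_pos_part_and_eq (hXmeas : Measurable X) (hXint : Integrable X μ) (s : ℝ) :
    IntegrableOn (fun β => max (VaR μ X β - s) 0) (Set.Ioo (0 : ℝ) 1) volume ∧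
      ∫ β in Set.Ioo (0 : ℝ) 1, max (VaR μ X β - s) 0 = ∫ ω, max (X ω - s) 0 ∂μ := by
  have hXs : Integrable (fun ω => max (X ω - s) 0) μ :=
    (hXint.sub (integrable_const s)).pos_part
  have hXnn : 0 ≤ᵐ[μ] fun ω => max (X ω - s) 0 :=
    Filter.Eventually.of_forall fun ω => le_max_right _ _
  have hQnn : 0 ≤ᵐ[volume.restrict (Set.Ioo (0 : ℝ) 1)] fun β => max (VaR μ X β - s) 0 :=
    Filter.Eventually.of_forall fun β => le_max_right _ _
  have hQm : AEMeasurable (fun β => max (VaR μ X β - s) 0)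
      (volume.restrict (Set.Ioo (0 : ℝ) 1)) :=
    ((aemeasurable_VaR hXmeas measurableSet_Ioo Set.Subset.rfl).sub aemeasurable_const).max
      aemeasurable_const
  have hfin : ∫⁻ ω, ENNReal.ofReal (max (X ω - s) 0) ∂μ < ⊤ :=
    (hasFiniteIntegral_iff_ofReal hXnn).1 hXs.hasFiniteIntegral
  have hint : IntegrableOn (fun β => max (VaR μ X β - s) 0) (Set.Ioo (0 : ℝ) 1) volume := by
    refine ⟨hQm.aestronglyMeasurable, (hasFiniteIntegral_iff_ofReal hQnn).2 ?_⟩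
    rw [← lintegral_pos_part_eq hXmeas s]
    exact hfin
  refine ⟨hint, ?_⟩
  rw [integral_eq_lintegral_of_nonneg_ae hQnn hQm.aestronglyMeasurable,
    integral_eq_lintegral_of_nonneg_ae hXnn hXs.aestronglyMeasurable,
    lintegral_pos_part_eq hXmeas s]

lemma integrableOn_VaR (hXmeas : Measurable X) (hXint : Integrable X μ) {α : ℝ}
    (hα : α ∈ Set.Ioo (0 : ℝ) 1) : IntegrableOn (VaR μ X) (Set.Ioo α 1) volume := by
  have h0 := (integrableOn_pos_part_and_eq hXmeas hXint 0).1
  have h0' : IntegrableOn (fun β => max (VaR μ X β - 0) 0) (Set.Ioo α 1) volume :=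
    h0.mono_set (Set.Ioo_subset_Ioo hα.1.le le_rfl)
  have hbound : Integrable
      (fun β => |VaR μ X α| + max (VaR μ X β - 0) 0) (volume.restrict (Set.Ioo α 1)) :=
    (integrable_const _).add h0'
  refine hbound.mono' ?_ ?_
  · exact (aemeasurable_VaR hXmeas measurableSet_Ioo
      (Set.Ioo_subset_Ioo hα.1.le le_rfl)).aestronglyMeasurable
  · filter_upwards [ae_restrict_mem measurableSet_Ioo] with β hβ
    have h1 : VaR μ X α ≤ VaR μ X β := VaR_mono hXmeas hα.1 hβ.1.le hβ.2
    rw [Real.norm_eq_abs, abs_le]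
    constructor
    · have h2 := neg_abs_le (VaR μ X α)
      have h3 : (0 : ℝ) ≤ max (VaR μ X β - 0) 0 := le_max_right _ _
      linarith
    · have h2 : VaR μ X β - 0 ≤ max (VaR μ X β - 0) 0 := le_max_left _ _
      have h3 := abs_nonneg (VaR μ X α)
      linarith

end VaRAux

/-- **ES optimization formula (Rockafellar–Uryasev).** For an integrable random variable `X`
on an atomless probability space and `α ∈ (0,1)`,
`ES_α(X) = min over t ∈ ℝ of { t + (1/(1-α)) E[(X - t)_+] }`, and the minimum is attained. -/
theorem ES_optimization {Ω : Type*} [MeasurableSpace Ω] (μ : Measure Ω)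
    [IsProbabilityMeasure μ] (hμ : Atomless μ) (X : Ω → ℝ)
    (hXmeas : Measurable X) (hXint : Integrable X μ)
    (α : ℝ) (hα : α ∈ Set.Ioo (0 : ℝ) 1) :
    IsLeast {y : ℝ | ∃ s : ℝ, y = s + (1 - α)⁻¹ * ∫ ω, max (X ω - s) 0 ∂μ}
      (ES μ X α) := by
  obtain ⟨hα0, hα1⟩ := hα
  have hne : (1 : ℝ) - α ≠ 0 := by linarith
  have hc0 : (0 : ℝ) < (1 - α)⁻¹ := inv_pos.2 (by linarith)
  have hQint : IntegrableOn (VaR μ X) (Set.Ioo α 1) volume :=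
    integrableOn_VaR hXmeas hXint ⟨hα0, hα1⟩
  have hvol : (volume (Set.Ioo α 1)).toReal = 1 - α := by
    rw [Real.volume_Ioo, ENNReal.toReal_ofReal (by linarith)]
  have hconst : ∀ s : ℝ, IntegrableOn (fun _ : ℝ => s) (Set.Ioo α 1) volume := fun s =>
    integrableOn_const measure_Ioo_lt_top.ne
  have hconst_int : ∀ s : ℝ, ∫ _ in Set.Ioo α 1, s = (1 - α) * s := by
    intro s
    rw [setIntegral_const, measureReal_def, hvol, smul_eq_mul]
  constructor
  · refine ⟨VaR μ X α, ?_⟩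
    obtain ⟨hi, he⟩ := integrableOn_pos_part_and_eq hXmeas hXint (VaR μ X α)
    rw [← he]
    have hsplit : Set.Ioo (0 : ℝ) 1 = Set.Ioc 0 α ∪ Set.Ioo α 1 :=
      (Set.Ioc_union_Ioo_eq_Ioo hα0.le hα1).symm
    have hdisj : Disjoint (Set.Ioc (0 : ℝ) α) (Set.Ioo α 1) := by
      rw [Set.disjoint_left]
      rintro β ⟨_, h2⟩ ⟨h3, _⟩
      exact absurd h3 (not_lt.2 h2)
    have hsub1 : Set.Ioc (0 : ℝ) α ⊆ Set.Ioo 0 1 := fun β hβ =>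
      ⟨hβ.1, lt_of_le_of_lt hβ.2 hα1⟩
    have hsub2 : Set.Ioo α 1 ⊆ Set.Ioo (0 : ℝ) 1 := Set.Ioo_subset_Ioo hα0.le le_rfl
    have h1 : ∫ β in Set.Ioc (0 : ℝ) α, max (VaR μ X β - VaR μ X α) 0 = 0 := by
      rw [setIntegral_congr_fun measurableSet_Ioc (g := fun _ => (0 : ℝ)) ?_, integral_zero]
      intro β hβ
      have hle : VaR μ X β ≤ VaR μ X α := VaR_mono hXmeas hβ.1 hβ.2 hα1
      simp [max_eq_right (by linarith : VaR μ X β - VaR μ X α ≤ 0)]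
    have h2 : ∫ β in Set.Ioo α 1, max (VaR μ X β - VaR μ X α) 0 =
        (∫ β in Set.Ioo α 1, VaR μ X β) - (1 - α) * VaR μ X α := by
      rw [setIntegral_congr_fun measurableSet_Ioo (g := fun β => VaR μ X β - VaR μ X α) ?_]
      · rw [integral_sub hQint (hconst _), hconst_int]
      · intro β hβ
        exact max_eq_left (sub_nonneg.2 (VaR_mono hXmeas hα0 hβ.1.le hβ.2))
    rw [hsplit, setIntegral_union hdisj measurableSet_Ioo (hi.mono_set hsub1)
      (hi.mono_set hsub2), h1, h2, ES]
    field_simp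
    ring
  · rintro y ⟨s, rfl⟩
    obtain ⟨hi, he⟩ := integrableOn_pos_part_and_eq hXmeas hXint s
    rw [← he]
    have hsub2 : Set.Ioo α 1 ⊆ Set.Ioo (0 : ℝ) 1 := Set.Ioo_subset_Ioo hα0.le le_rfl
    have hi' : IntegrableOn (fun β => max (VaR μ X β - s) 0) (Set.Ioo α 1) volume :=
      hi.mono_set hsub2
    have hstep1 : ∫ β in Set.Ioo α 1, (VaR μ X β - s) ≤
        ∫ β in Set.Ioo α 1, max (VaR μ X β - s) 0 :=
      integral_mono (hQint.sub (hconst s)) hi' fun β => le_max_left _ _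
    have hstep2 : ∫ β in Set.Ioo α 1, max (VaR μ X β - s) 0 ≤
        ∫ β in Set.Ioo (0 : ℝ) 1, max (VaR μ X β - s) 0 :=
      setIntegral_mono_set hi (Filter.Eventually.of_forall fun β => le_max_right _ _)
        (HasSubset.Subset.eventuallyLE hsub2)
    have hsubint : ∫ β in Set.Ioo α 1, (VaR μ X β - s) =
        (∫ β in Set.Ioo α 1, VaR μ X β) - (1 - α) * s := by
      rw [integral_sub hQint (hconst s), hconst_int]
    have hkey : ∫ β in Set.Ioo α 1, VaR μ X β ≤
        (∫ β in Set.Ioo (0 : ℝ) 1, max (VaR μ X β - s) 0) + (1 - α) * s := by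
      linarith
    rw [ES]
    calc (1 - α)⁻¹ * ∫ β in Set.Ioo α 1, VaR μ X β ≤
        (1 - α)⁻¹ * ((∫ β in Set.Ioo (0 : ℝ) 1, max (VaR μ X β - s) 0) + (1 - α) * s) :=
          mul_le_mul_of_nonneg_left hkey hc0.le
      _ = s + (1 - α)⁻¹ * ∫ β in Set.Ioo (0 : ℝ) 1, max (VaR μ X β - s) 0 := by
          field_simp
          ring
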